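/- Let S ⊆ P_h be a finite set. Then S is h-admissible if and only if both S and its complement S^c := P_h \ S are h-closed. -/

import Mathlib

open Finset

/-- The 1-based `k`-th entry (as a value in `{1,…,n}`) of a permutation of `Fin n`. -/
def entry {n : ℕ} (π : Equiv.Perm (Fin n)) (k : ℕ) : ℕ :=
  if hk : k - 1 < n then ((π ⟨k - 1, hk⟩ : Fin n) : ℕ) + 1 else 0

/-- The set of possible h-inversions `P_h = {(i,j) : 0 < i, i < j ≤ h i}`. -/
def Ph (h : ℕ → ℕ) : Set (ℕ × ℕ) := {p | 0 < p.1 ∧ p.1 < p.2 ∧ p.2 ≤ h p.1}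

/-- The set of h-inversions of a permutation `π ∈ S_n`, as 1-based pairs:
`inv_h(π) = {(i,j) : i < j ≤ min(h i, n), π_i > π_j}`. -/
def invh (h : ℕ → ℕ) {n : ℕ} (π : Equiv.Perm (Fin n)) : Finset (ℕ × ℕ) :=
  ((Finset.univ : Finset (Fin n × Fin n)).filter
      (fun p => (p.1 : ℕ) < (p.2 : ℕ) ∧ (p.2 : ℕ) + 1 ≤ h ((p.1 : ℕ) + 1) ∧ π p.2 < π p.1)).image
    (fun p => ((p.1 : ℕ) + 1, (p.2 : ℕ) + 1))

/-- `I_h(S,n)`, the set of permutations of `S_n` with h-inversion set `S`. -/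
def Ih (h : ℕ → ℕ) (S : Finset (ℕ × ℕ)) (n : ℕ) : Finset (Equiv.Perm (Fin n)) :=
  Finset.univ.filter (fun π => invh h π = S)

/-- `𝓘_h(S;n) = #I_h(S,n)`. -/
def Icount (h : ℕ → ℕ) (S : Finset (ℕ × ℕ)) (n : ℕ) : ℕ := (Ih h S n).card

/-- `S` is h-admissible when it is the h-inversion set of some permutation. -/
def Admissible (h : ℕ → ℕ) (S : Finset (ℕ × ℕ)) : Prop := ∃ n, (Ih h S n).Nonempty

/-- `j(S)`, the largest index appearing in a pair of `S`. -/
def jS (S : Finset (ℕ × ℕ)) : ℕ := S.sup Prod.snd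

/-- `m(S)`, the maximum descent of `S`. -/
def mS (S : Finset (ℕ × ℕ)) : ℕ := (S.filter fun p => p.2 = p.1 + 1).sup Prod.fst

/-- `t(σ) = max{σ_k : 1 ≤ k ≤ j(S), h(k) ≥ j(S)+1}`. -/
def tOf (h : ℕ → ℕ) (S : Finset (ℕ × ℕ)) (σ : Equiv.Perm (Fin (jS S))) : ℕ :=
  ((Finset.Icc 1 (jS S)).filter fun k => jS S + 1 ≤ h k).sup (entry σ)

/-- `B_k(S,n)`, the permutations in `I_h(S,n)` with entry `k` in position `h(m(S))`. -/
def Bset (h : ℕ → ℕ) (S : Finset (ℕ × ℕ)) (k n : ℕ) : Finset (Equiv.Perm (Fin n)) :=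
  (Ih h S n).filter fun π => entry π (h (mS S)) = k

/-- The coefficient `b_k(S) = #B_k(S, h(m(S)))`. -/
def bCoeff (h : ℕ → ℕ) (S : Finset (ℕ × ℕ)) (k : ℕ) : ℕ := (Bset h S k (h (mS S))).card

/-- The coefficient `a_k(S)`. -/
def aCoeff (h : ℕ → ℕ) (S : Finset (ℕ × ℕ)) (k : ℕ) : ℕ :=
  ((Ih h S (mS S + h (mS S) - 1)).filter fun π =>
    ((Finset.Icc 1 (mS S)).image (entry π)) ∩ Finset.Icc (h (mS S)) (mS S + h (mS S) - 1)
      = Finset.Icc (h (mS S)) (h (mS S) + k - 1)).card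

/-- The length (number of inversions) of a permutation. -/
def lenPerm {n : ℕ} (π : Equiv.Perm (Fin n)) : ℕ :=
  ((Finset.univ : Finset (Fin n × Fin n)).filter fun p => p.1 < p.2 ∧ π p.2 < π p.1).card

/-- `ℓ_{[a,b]}(A) = #{(x,y) ∈ [a,b]² : x > y, x ∈ A, y ∉ A}`. -/
def lenSet (a b : ℕ) (A : Finset ℕ) : ℕ :=
  ((Finset.Icc a b ×ˢ Finset.Icc a b).filter fun q => q.2 < q.1 ∧ q.1 ∈ A ∧ q.2 ∉ A).card

/-- A subset `T ⊆ P_h` is h-closed if `(i,j) ∈ T`, `(j,k) ∈ T` and `(i,k) ∈ P_h`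
imply `(i,k) ∈ T`. -/
def HClosed (h : ℕ → ℕ) (T : Set (ℕ × ℕ)) : Prop :=
  ∀ i j k : ℕ, (i, j) ∈ T → (j, k) ∈ T → (i, k) ∈ Ph h → (i, k) ∈ T

/-- A finite set `S ⊆ P_h` is h-admissible iff both `S` and its complement
`P_h \ S` are h-closed. -/
lemma mem_invh_iff {h : ℕ → ℕ} {n : ℕ} (π : Equiv.Perm (Fin n)) (q : ℕ × ℕ) :
    q ∈ invh h π ↔ ∃ a b : Fin n, (a:ℕ) < (b:ℕ) ∧ (b:ℕ)+1 ≤ h ((a:ℕ)+1) ∧ π b < π a ∧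
      ((a:ℕ)+1, (b:ℕ)+1) = q := by
  simp only [invh, Finset.mem_image, Finset.mem_filter, Finset.mem_univ, true_and, Prod.exists]
  constructor
  · rintro ⟨a, b, ⟨h1, h2, h3⟩, h4⟩; exact ⟨a, b, h1, h2, h3, h4⟩
  · rintro ⟨a, b, h1, h2, h3, h4⟩; exact ⟨a, b, ⟨h1, h2, h3⟩, h4⟩


/-- the desired "value order" generator: `hrel a b` means "π a < π b" is forced. -/
def hrel (h : ℕ → ℕ) (S : Finset (ℕ × ℕ)) {n : ℕ} (a b : Fin n) : Prop :=
  ((a:ℕ) < (b:ℕ) ∧ (b:ℕ)+1 ≤ h ((a:ℕ)+1) ∧ ((a:ℕ)+1, (b:ℕ)+1) ∉ S) ∨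
  ((b:ℕ) < (a:ℕ) ∧ ((b:ℕ)+1, (a:ℕ)+1) ∈ S)

lemma hrel_irrefl {h S} {n : ℕ} (a : Fin n) : ¬ hrel h S a a := by
  rintro (⟨hlt, -⟩ | ⟨hlt, -⟩) <;> exact lt_irrefl _ hlt

lemma hrel_shorten {h : ℕ → ℕ} {S : Finset (ℕ × ℕ)} (hS : ↑S ⊆ Ph h)
    (hc1 : HClosed h ↑S) (hc2 : HClosed h (Ph h \ ↑S)) {n : ℕ} {u m w : Fin n}
    (hum : (u:ℕ) < (m:ℕ)) (hwm : (w:ℕ) < (m:ℕ))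
    (h1 : hrel h S u m) (h2 : hrel h S m w) : hrel h S u w := by
  rcases h1 with ⟨-, hwin, hnS⟩ | ⟨hlt, -⟩
  · rcases h2 with ⟨hlt, -⟩ | ⟨-, hmem⟩
    · exact absurd hlt (by omega)
    · -- (w+1, m+1) ∈ S, (u+1, m+1) ∉ S, m+1 ≤ h (u+1)
      have hmhw : (m:ℕ)+1 ≤ h ((w:ℕ)+1) := (hS hmem).2.2
      have humPh : ((u:ℕ)+1, (m:ℕ)+1) ∈ Ph h := ⟨Nat.succ_pos _, by omega, hwin⟩
      rcases lt_trichotomy (u:ℕ) (w:ℕ) with huw | huw | huw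
      · left
        refine ⟨huw, by omega, fun hmemS => hnS ?_⟩
        exact hc1 _ _ _ hmemS hmem humPh
      · exfalso; apply hnS
        have : u = w := Fin.ext huw
        rw [this]; exact hmem
      · right
        refine ⟨huw, by_contra fun hnS2 => ?_⟩
        have hwuPh : ((w:ℕ)+1, (u:ℕ)+1) ∈ Ph h := ⟨Nat.succ_pos _, show (w:ℕ)+1 < (u:ℕ)+1 by omega, show (u:ℕ)+1 ≤ h ((w:ℕ)+1) by omega⟩
        exact (hc2 _ _ _ ⟨hwuPh, hnS2⟩ ⟨humPh, hnS⟩ (hS hmem)).2 hmem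
  · exact absurd hlt (by omega)

/-- restricted relation -/
def hrelk (h : ℕ → ℕ) (S : Finset (ℕ × ℕ)) {n : ℕ} (k : ℕ) (a b : Fin n) : Prop :=
  hrel h S a b ∧ (a:ℕ) ≤ k ∧ (b:ℕ) ≤ k

lemma hrelk_acyclic {h : ℕ → ℕ} {S : Finset (ℕ × ℕ)} (hS : ↑S ⊆ Ph h)
    (hc1 : HClosed h ↑S) (hc2 : HClosed h (Ph h \ ↑S)) {n : ℕ} :
    ∀ k : ℕ, ∀ a : Fin n, ¬ Relation.TransGen (hrelk h S k) a a := by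
  intro k
  induction k with
  | zero =>
    intro a hcyc
    obtain ⟨b, hab, -⟩ := (Relation.TransGen.head'_iff).mp hcyc
    obtain ⟨hr, ha, hb⟩ := hab
    have : a = b := Fin.ext (by omega)
    exact hrel_irrefl b (this ▸ hr)
  | succ k IH =>
    -- key reduction lemma
    have A : ∀ x y : Fin n, Relation.TransGen (hrelk h S (k+1)) x y → (y:ℕ) ≤ k →
        (((x:ℕ) ≤ k → Relation.TransGen (hrelk h S k) x y) ∧
         ((x:ℕ) = k+1 → ∀ u : Fin n, (u:ℕ) ≤ k → hrel h S u x →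
            Relation.TransGen (hrelk h S k) u y)) := by
      intro x y hxy hy
      induction hxy using Relation.TransGen.head_induction_on with
      | single hxy =>
        rename_i x'
        obtain ⟨hr, hx', -⟩ := hxy
        constructor
        · intro hx; exact Relation.TransGen.single ⟨hr, hx, hy⟩
        · intro hx u hu hux
          have : hrel h S u y :=
            hrel_shorten hS hc1 hc2 (by omega) (by omega) hux hr
          exact Relation.TransGen.single ⟨this, hu, hy⟩
      | head hxb hby IHb =>
        rename_i x' b
        obtain ⟨hr, hx', hb'⟩ := hxb
        constructor
        · intro hx
          rcases Nat.lt_or_ge (b:ℕ) (k+1) with hb | hb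
          · exact (IHb.1 (by omega)).head ⟨hr, hx, by omega⟩
          · exact IHb.2 (by omega) x' hx hr
        · intro hx u hu hux
          have hbk : (b:ℕ) ≤ k := by
            rcases Nat.lt_or_ge (b:ℕ) (k+1) with hb | hb
            · omega
            · exfalso
              have : x' = b := Fin.ext (by omega)
              exact hrel_irrefl x' (by rw [this] at hr ⊢; exact hr)
          have hub : hrel h S u b :=
            hrel_shorten hS hc1 hc2 (by omega) (by omega) hux hr
          exact (IHb.1 hbk).head ⟨hub, hu, hbk⟩
    intro a hcyc
    rcases Nat.lt_or_ge (a:ℕ) (k+1) with ha | ha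
    · exact IH a ((A a a hcyc (by omega)).1 (by omega))
    · have ha : (a:ℕ) = k+1 := by
        have := hcyc
        obtain ⟨b, ⟨-, ha2, -⟩, -⟩ := (Relation.TransGen.head'_iff).mp this
        omega
      obtain ⟨c, hac, hca⟩ := (Relation.TransGen.tail'_iff).mp hcyc
      obtain ⟨hrca, hc', -⟩ := hca
      have hca_ne : c ≠ a := fun hEq => hrel_irrefl a (hEq ▸ hrca)
      have hck : (c:ℕ) ≤ k := by
        have : (c:ℕ) ≠ (a:ℕ) := fun hEq => hca_ne (Fin.ext hEq)
        omega
      rcases hac.cases_head with hEq | ⟨b, hab, hbc⟩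
      · exact hca_ne (hEq.symm)
      · obtain ⟨hrab, -, hb'⟩ := hab
        have hab_ne : a ≠ b := fun hEq => hrel_irrefl a (by rw [← hEq] at hrab; exact hrab)
        have hbk : (b:ℕ) ≤ k := by
          have : (b:ℕ) ≠ (a:ℕ) := fun hEq => hab_ne (Fin.ext hEq.symm)
          omega
        have hcb : hrel h S c b :=
          hrel_shorten hS hc1 hc2 (by omega) (by omega) hrca hrab
        rcases eq_or_ne b c with hEq | hne
        · exact hrel_irrefl c (by rw [hEq] at hcb; exact hcb)
        · have hbc' : Relation.TransGen (hrelk h S (k+1)) b c := by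
            rcases Relation.reflTransGen_iff_eq_or_transGen.mp hbc with hEq | htg
            · exact absurd hEq.symm hne
            · exact htg
          have := (A b c hbc' hck).1 hbk
          exact IH b (this.tail ⟨hcb, hck, hbk⟩)

lemma hrel_acyclic {h : ℕ → ℕ} {S : Finset (ℕ × ℕ)} (hS : ↑S ⊆ Ph h)
    (hc1 : HClosed h ↑S) (hc2 : HClosed h (Ph h \ ↑S)) {n : ℕ} (a : Fin n) :
    ¬ Relation.TransGen (hrel h S) a a := by
  intro hcyc
  exact hrelk_acyclic hS hc1 hc2 n a
    (Relation.TransGen.mono (fun x y hxy => ⟨hxy, x.isLt.le, y.isLt.le⟩) _ _ hcyc)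

lemma exists_perm_realizing {h : ℕ → ℕ} {S : Finset (ℕ × ℕ)} (hS : ↑S ⊆ Ph h)
    (hc1 : HClosed h ↑S) (hc2 : HClosed h (Ph h \ ↑S)) (n : ℕ) :
    ∃ π : Equiv.Perm (Fin n), ∀ a b : Fin n, hrel h S a b → π a < π b := by
  classical
  set le : Fin n → Fin n → Prop := fun a b => a = b ∨ Relation.TransGen (hrel h S) a b with hle
  haveI : IsPartialOrder (Fin n) le := by
    refine { refl := fun a => Or.inl rfl, trans := ?_, antisymm := ?_ }
    · rintro a b c (rfl | hab) (rfl | hbc)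
      · exact Or.inl rfl
      · exact Or.inr hbc
      · exact Or.inr hab
      · exact Or.inr (hab.trans hbc)
    · rintro a b (rfl | hab) (hba | hba)
      · rfl
      · rfl
      · exact hba.symm
      · exact absurd (hab.trans hba) (hrel_acyclic hS hc1 hc2 a)
  obtain ⟨s, hlin, hsub⟩ := extend_partialOrder le
  haveI := hlin
  set t : Fin n → Fin n → Prop := fun a b => s a b ∧ a ≠ b with ht
  have t_of_hrel : ∀ a b, hrel h S a b → t a b := by
    intro a b hab
    refine ⟨hsub _ _ (Or.inr (Relation.TransGen.single hab)), ?_⟩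
    rintro rfl; exact hrel_irrefl a hab
  have t_trans : ∀ a b c, t a b → t b c → t a c := by
    rintro a b c ⟨hab, hne1⟩ ⟨hbc, hne2⟩
    refine ⟨Trans.trans hab hbc, ?_⟩
    rintro rfl
    exact hne1 (antisymm hab hbc)
  have t_total : ∀ a b : Fin n, a ≠ b → t a b ∨ t b a := by
    intro a b hne
    rcases total_of s a b with hab | hba
    · exact Or.inl ⟨hab, hne⟩
    · exact Or.inr ⟨hba, hne.symm⟩
  -- rank function
  set f : Fin n → Fin n := fun a =>
    ⟨(Finset.univ.filter fun b => t b a).card, by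
      have hss : (Finset.univ.filter fun b => t b a) ⊂ Finset.univ := by
        refine (Finset.filter_subset _ _).ssubset_of_ne ?_
        intro hEq
        have : a ∈ Finset.univ.filter fun b => t b a := hEq.symm ▸ Finset.mem_univ a
        exact (Finset.mem_filter.mp this).2.2 rfl
      have := Finset.card_lt_card hss
      simpa using this⟩ with hf
  have fmono : ∀ a b, t a b → f a < f b := by
    intro a b hab
    have hss : (Finset.univ.filter fun c => t c a) ⊂ (Finset.univ.filter fun c => t c b) := by
      refine ⟨fun c hc => ?_, fun hcon => ?_⟩
      · simp only [Finset.mem_filter, Finset.mem_univ, true_and] at hc ⊢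
        exact t_trans _ _ _ hc hab
      · have : a ∈ Finset.univ.filter fun c => t c a :=
          hcon (by simp only [Finset.mem_filter, Finset.mem_univ, true_and]; exact hab)
        exact (Finset.mem_filter.mp this).2.2 rfl
    exact Finset.card_lt_card hss
  have finj : Function.Injective f := by
    intro a b hEq
    by_contra hne
    rcases t_total a b hne with hab | hba
    · exact absurd hEq (Fin.ne_of_lt (fmono _ _ hab))
    · exact absurd hEq.symm (Fin.ne_of_lt (fmono _ _ hba))
  refine ⟨Equiv.ofBijective f (Finite.injective_iff_bijective.mp finj), ?_⟩
  intro a b hab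
  exact fmono a b (t_of_hrel a b hab)

theorem stmt0 (h : ℕ → ℕ) (hmono : ∀ ⦃i j : ℕ⦄, 0 < i → i ≤ j → h i ≤ h j)
    (hgt : ∀ i : ℕ, 0 < i → i < h i) (S : Finset (ℕ × ℕ)) (hS : ↑S ⊆ Ph h) :
    Admissible h S ↔ HClosed h ↑S ∧ HClosed h (Ph h \ ↑S) := by
  classical
  constructor
  · rintro ⟨n, π, hπ⟩
    have heq : invh h π = S := (Finset.mem_filter.mp hπ).2
    constructor
    · -- S is h-closed
      intro i j k hij hjk hik
      rw [Finset.mem_coe, ← heq] at hij hjk ⊢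
      obtain ⟨a, b, hab, hwab, hvab, heq1⟩ := (mem_invh_iff π _).mp hij
      obtain ⟨c, d, hcd, hwcd, hvcd, heq2⟩ := (mem_invh_iff π _).mp hjk
      obtain ⟨hi, hj⟩ := Prod.mk.injEq .. ▸ heq1
      obtain ⟨hj2, hk⟩ := Prod.mk.injEq .. ▸ heq2
      have hbc : b = c := Fin.ext (by omega)
      refine (mem_invh_iff π _).mpr ⟨a, d, by omega, ?_, ?_, by rw [hi, hk]⟩
      · rw [hi, hk] at *
        exact hik.2.2
      · subst hbc
        exact hvcd.trans hvab
    · -- complement is h-closed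
      intro i j k hij hjk hik
      refine ⟨hik, fun hikS => ?_⟩
      rw [Finset.mem_coe, ← heq] at hikS
      obtain ⟨a, d, had, hw, hv, heqad⟩ := (mem_invh_iff π _).mp hikS
      obtain ⟨hi, hk⟩ := Prod.mk.injEq .. ▸ heqad
      obtain ⟨⟨hi0, hijlt, hjle⟩, hijnS⟩ := hij
      obtain ⟨⟨hj0, hjklt, hkle⟩, hjknS⟩ := hjk
      have hjn : j - 1 < n := by omega
      set b : Fin n := ⟨j - 1, hjn⟩ with hb
      have hb1 : (b:ℕ) + 1 = j := by simp [hb]; omega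
      have h1 : ¬ π b < π a := by
        intro hlt
        apply hijnS
        rw [Finset.mem_coe, ← heq]
        exact (mem_invh_iff π _).mpr ⟨a, b, by omega, by rw [hb1, hi]; exact hjle, hlt, by rw [hi, hb1]⟩
      have h2 : ¬ π d < π b := by
        intro hlt
        apply hjknS
        rw [Finset.mem_coe, ← heq]
        exact (mem_invh_iff π _).mpr ⟨b, d, by omega, by rw [hb1, hk]; exact hkle, hlt, by rw [hb1, hk]⟩
      push_neg at h1 h2
      exact absurd hv (not_lt.mpr (h1.trans h2))
  · rintro ⟨hc1, hc2⟩
    set n := jS S with hn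
    obtain ⟨π, hπ⟩ := exists_perm_realizing hS hc1 hc2 n
    refine ⟨n, π, Finset.mem_filter.mpr ⟨Finset.mem_univ _, ?_⟩⟩
    apply Finset.ext
    intro q
    rw [mem_invh_iff]
    constructor
    · rintro ⟨a, b, hab, hwin, hv, rfl⟩
      by_contra hnS
      exact absurd (hπ a b (Or.inl ⟨hab, hwin, hnS⟩)) (not_lt.mpr hv.le)
    · intro hqS
      obtain ⟨hq0, hqlt, hqle⟩ := hS hqS
      have hq2n : q.2 ≤ n := Finset.le_sup (f := Prod.snd) hqS
      have hb : q.2 - 1 < n := by omega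
      have ha : q.1 - 1 < n := by omega
      refine ⟨⟨q.1 - 1, ha⟩, ⟨q.2 - 1, hb⟩, by simp; omega, ?_, ?_, ?_⟩
      · have e1 : (q.1 - 1) + 1 = q.1 := by omega
        have e2 : (q.2 - 1) + 1 = q.2 := by omega
        simp only [e1, e2]
        exact hqle
      · apply hπ
        right
        constructor
        · simp; omega
        · have e1 : (q.1 - 1) + 1 = q.1 := by omega
          have e2 : (q.2 - 1) + 1 = q.2 := by omega
          simp only [e1, e2]
          exact hqS
      · have e1 : (q.1 - 1) + 1 = q.1 := by omega
        have e2 : (q.2 - 1) + 1 = q.2 := by omega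
        simp only [e1, e2]
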